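/- Let T be an ℕ^k-action by local homeomorphisms on a locally compact Hausdorff space X with a dense orbit, and suppose for every nonempty open U ⊆ X one has Σ_U = Σ. Then the interior of the isotropy of the Deaconu–Renault groupoid G_T equals {(x, g, x) : x ∈ X, g ∈ H(T)}, where H(T) = {m − n : (m,n) ∈ Σ}. -/

import Mathlib

/-- The difference `m − n ∈ ℤ^k` of `m, n ∈ ℕ^k`. -/
def zdiff {k : ℕ} (m n : Fin k → ℕ) : Fin k → ℤ := fun i => (m i : ℤ) - n i

/-- The Deaconu–Renault groupoid of an `ℕ^k`-action `T`, as a subset of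
`X × ℤ^k × X`. -/
def DRGroupoid {k : ℕ} {X : Type*} (T : (Fin k → ℕ) → X → X) :
    Set (X × (Fin k → ℤ) × X) :=
  {t | ∃ m n : Fin k → ℕ, zdiff m n = t.2.1 ∧ T m t.1 = T n t.2.2}

/-- The basic set `Z(U,m,n,V)` of the Deaconu–Renault groupoid. -/
def ZSet {k : ℕ} {X : Type*} (T : (Fin k → ℕ) → X → X)
    (U V : Set X) (m n : Fin k → ℕ) : Set (DRGroupoid T) :=
  {γ | γ.val.1 ∈ U ∧ γ.val.2.2 ∈ V ∧ γ.val.2.1 = zdiff m n ∧ T m γ.val.1 = T n γ.val.2.2}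

/-- The topology on the Deaconu–Renault groupoid generated by the sets
`Z(U,m,n,V)` with `U, V` open. -/
def DRTopology {k : ℕ} {X : Type*} [TopologicalSpace X]
    (T : (Fin k → ℕ) → X → X) : TopologicalSpace (DRGroupoid T) :=
  TopologicalSpace.generateFrom
    {Z | ∃ U V : Set X, ∃ m n : Fin k → ℕ, IsOpen U ∧ IsOpen V ∧ Z = ZSet T U V m n}

/-- Pairwise basis lemma: the intersection of two basic sets contains a basic
set around each of its points. -/
lemma zset_inter_basis {k : ℕ} {X : Type*} [TopologicalSpace X]
    (T : (Fin k → ℕ) → X → X)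
    (hTadd : ∀ m n, T (m + n) = T m ∘ T n)
    (hloc : ∀ m, IsLocalHomeomorph (T m))
    {U₁ V₁ U₂ V₂ : Set X} (hU₁ : IsOpen U₁) (hV₁ : IsOpen V₁)
    (hU₂ : IsOpen U₂) (hV₂ : IsOpen V₂)
    {m₁ n₁ m₂ n₂ : Fin k → ℕ} {γ : DRGroupoid T}
    (h₁ : γ ∈ ZSet T U₁ V₁ m₁ n₁) (h₂ : γ ∈ ZSet T U₂ V₂ m₂ n₂) :
    ∃ (U V : Set X) (m n : Fin k → ℕ), IsOpen U ∧ IsOpen V ∧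
      γ ∈ ZSet T U V m n ∧
      ZSet T U V m n ⊆ ZSet T U₁ V₁ m₁ n₁ ∩ ZSet T U₂ V₂ m₂ n₂ := by
  obtain ⟨hxU₁, hzV₁, hg₁, hT₁⟩ := h₁
  obtain ⟨hxU₂, hzV₂, hg₂, hT₂⟩ := h₂
  have hgj : ∀ j, (m₁ j : ℤ) - n₁ j = (m₂ j : ℤ) - n₂ j := by
    intro j
    have := (hg₁.symm.trans hg₂)
    exact congrFun this j
  set m : Fin k → ℕ := fun j => max (m₁ j) (m₂ j) with hm_def
  set d₁ : Fin k → ℕ := fun j => m j - m₁ j with hd₁_def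
  set d₂ : Fin k → ℕ := fun j => m j - m₂ j with hd₂_def
  set n : Fin k → ℕ := d₁ + n₁ with hn_def
  have hm₁ : d₁ + m₁ = m := by
    funext j
    simp only [Pi.add_apply, hd₁_def, hm_def]
    omega
  have hm₂ : d₂ + m₂ = m := by
    funext j
    simp only [Pi.add_apply, hd₂_def, hm_def]
    omega
  have hn₂ : d₂ + n₂ = n := by
    funext j
    have := hgj j
    simp only [Pi.add_apply, hd₁_def, hd₂_def, hn_def, hm_def] at *
    omega
  have hzd₁ : zdiff m n = zdiff m₁ n₁ := by
    funext j
    simp only [zdiff, hn_def, Pi.add_apply, hd₁_def, hm_def]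
    push_cast
    have : m₁ j ≤ max (m₁ j) (m₂ j) := le_max_left _ _
    omega
  have hzd₂ : zdiff m n = zdiff m₂ n₂ := hzd₁.trans (hg₁.symm.trans hg₂ ▸ rfl)
  -- local homeomorphisms for the correction maps
  obtain ⟨e₁, he₁, hfe₁⟩ := hloc d₁ (T m₁ γ.val.1)
  obtain ⟨e₂, he₂, hfe₂⟩ := hloc d₂ (T m₂ γ.val.1)
  have hcomp : ∀ (a b : Fin k → ℕ) (y : X), T (a + b) y = T a (T b y) := by
    intro a b y; rw [hTadd]; rfl
  refine ⟨U₁ ∩ U₂ ∩ (T m₁ ⁻¹' e₁.source) ∩ (T m₂ ⁻¹' e₂.source),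
          V₁ ∩ V₂ ∩ (T n₁ ⁻¹' e₁.source) ∩ (T n₂ ⁻¹' e₂.source), m, n, ?_, ?_, ?_, ?_⟩
  · exact (((hU₁.inter hU₂).inter
      (e₁.open_source.preimage (hloc m₁).continuous)).inter
      (e₂.open_source.preimage (hloc m₂).continuous))
  · exact (((hV₁.inter hV₂).inter
      (e₁.open_source.preimage (hloc n₁).continuous)).inter
      (e₂.open_source.preimage (hloc n₂).continuous))
  · refine ⟨⟨⟨⟨hxU₁, hxU₂⟩, he₁⟩, he₂⟩,
      ⟨⟨⟨hzV₁, hzV₂⟩, ?_⟩, ?_⟩, hg₁.trans hzd₁.symm, ?_⟩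
    · show T n₁ γ.val.2.2 ∈ e₁.source
      rw [← hT₁]; exact he₁
    · show T n₂ γ.val.2.2 ∈ e₂.source
      rw [← hT₂]; exact he₂
    · calc T m γ.val.1 = T d₁ (T m₁ γ.val.1) := by rw [← hm₁, hcomp]
        _ = T d₁ (T n₁ γ.val.2.2) := by rw [hT₁]
        _ = T n γ.val.2.2 := by rw [hn_def, hcomp]
  · rintro γ' ⟨⟨⟨⟨hyU₁, hyU₂⟩, hy₁⟩, hy₂⟩, ⟨⟨⟨hwV₁, hwV₂⟩, hw₁⟩, hw₂⟩, hg', hT'⟩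
    have key₁ : T m₁ γ'.val.1 = T n₁ γ'.val.2.2 := by
      have h : T d₁ (T m₁ γ'.val.1) = T d₁ (T n₁ γ'.val.2.2) := by
        calc T d₁ (T m₁ γ'.val.1) = T m γ'.val.1 := by rw [← hm₁, hcomp]
          _ = T n γ'.val.2.2 := hT'
          _ = T d₁ (T n₁ γ'.val.2.2) := by rw [hn_def, hcomp]
      rw [hfe₁] at h
      exact e₁.injOn hy₁ hw₁ h
    have key₂ : T m₂ γ'.val.1 = T n₂ γ'.val.2.2 := by
      have h : T d₂ (T m₂ γ'.val.1) = T d₂ (T n₂ γ'.val.2.2) := by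
        calc T d₂ (T m₂ γ'.val.1) = T m γ'.val.1 := by rw [← hm₂, hcomp]
          _ = T n γ'.val.2.2 := hT'
          _ = T d₂ (T n₂ γ'.val.2.2) := by rw [← hn₂, hcomp]
      rw [hfe₂] at h
      exact e₂.injOn hy₂ hw₂ h
    exact ⟨⟨hyU₁, hwV₁, hg'.trans hzd₁, key₁⟩, ⟨hyU₂, hwV₂, hg'.trans hzd₂, key₂⟩⟩

/-- If a basic set containing `γ` is contained in the isotropy, then
`T^m = T^n` on a nonempty open set. -/
lemma zset_subset_isotropy {k : ℕ} {X : Type*} [TopologicalSpace X]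
    (T : (Fin k → ℕ) → X → X)
    (hloc : ∀ m, IsLocalHomeomorph (T m))
    {U V : Set X} (hU : IsOpen U) (hV : IsOpen V)
    {m n : Fin k → ℕ} {γ : DRGroupoid T}
    (hγ : γ ∈ ZSet T U V m n)
    (hsub : ZSet T U V m n ⊆ {γ : DRGroupoid T | γ.val.1 = γ.val.2.2}) :
    ∃ W : Set X, IsOpen W ∧ W.Nonempty ∧ ∀ y ∈ W, T m y = T n y := by
  obtain ⟨hxU, hzV, hg, hTmn⟩ := hγ
  obtain ⟨e, hz_e, hTe⟩ := hloc n γ.val.2.2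
  have him : IsOpen (e '' (V ∩ e.source)) :=
    e.isOpen_image_of_subset_source (hV.inter e.open_source) Set.inter_subset_right
  refine ⟨U ∩ T m ⁻¹' (e '' (V ∩ e.source)), hU.inter (him.preimage (hloc m).continuous),
    ⟨γ.val.1, hxU, ?_⟩, ?_⟩
  · show T m γ.val.1 ∈ e '' (V ∩ e.source)
    exact ⟨γ.val.2.2, ⟨hzV, hz_e⟩, by rw [← hTe]; exact hTmn.symm⟩
  · rintro y ⟨hyU, hy⟩
    obtain ⟨w, ⟨hwV, hw_e⟩, hew⟩ := hy
    have hTw : T m y = T n w := by rw [hTe]; exact hew.symm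
    have hmem : (y, zdiff m n, w) ∈ DRGroupoid T := ⟨m, n, rfl, hTw⟩
    have : (⟨(y, zdiff m n, w), hmem⟩ : DRGroupoid T) ∈ ZSet T U V m n :=
      ⟨hyU, hwV, rfl, hTw⟩
    have hyw : y = w := hsub this
    rw [hTw, hyw]

/-- If `T` is an `ℕ^k`-action by local homeomorphisms on a locally compact Hausdorff
space `X` with a dense orbit, and `Σ_U = Σ` for every nonempty open `U`, then the
interior of the isotropy of `G_T` is `{(x,g,x) : x ∈ X, g ∈ H(T)}`. -/
theorem interior_isotropy_of_DR {k : ℕ} {X : Type*} [TopologicalSpace X]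
    [LocallyCompactSpace X] [T2Space X]
    (T : (Fin k → ℕ) → X → X) (hT0 : T 0 = id)
    (hTadd : ∀ m n, T (m + n) = T m ∘ T n)
    (hloc : ∀ m, IsLocalHomeomorph (T m))
    (hdense : ∃ x : X, Dense {y : X | ∃ m n : Fin k → ℕ, T m x = T n y})
    (hSigma : ∀ U : Set X, IsOpen U → U.Nonempty →
      {p : (Fin k → ℕ) × (Fin k → ℕ) | ∀ y ∈ U, T p.1 y = T p.2 y} =
      {p : (Fin k → ℕ) × (Fin k → ℕ) |
        ∃ V : Set X, IsOpen V ∧ V.Nonempty ∧ ∀ y ∈ V, T p.1 y = T p.2 y}) :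
    @interior _ (DRTopology T) {γ : DRGroupoid T | γ.val.1 = γ.val.2.2} =
    {γ : DRGroupoid T | γ.val.1 = γ.val.2.2 ∧
      ∃ p q : Fin k → ℕ,
        (∃ V : Set X, IsOpen V ∧ V.Nonempty ∧ ∀ y ∈ V, T p y = T q y) ∧
        zdiff p q = γ.val.2.1} := by
  letI τ : TopologicalSpace (DRGroupoid T) := DRTopology T
  obtain ⟨x₀, -⟩ := hdense
  set S : Set (Set (DRGroupoid T)) :=
    {Z | ∃ U V : Set X, ∃ m n : Fin k → ℕ, IsOpen U ∧ IsOpen V ∧ Z = ZSet T U V m n}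
    with hS_def
  set Iso : Set (DRGroupoid T) := {γ : DRGroupoid T | γ.val.1 = γ.val.2.2} with hIso_def
  have hτ : τ = TopologicalSpace.generateFrom S := rfl
  have hbasis := TopologicalSpace.isTopologicalBasis_of_subbasis hτ
  -- Σ_univ = Σ: equality on some nonempty open set implies global equality
  have hglob : ∀ p q : Fin k → ℕ,
      (∃ V : Set X, IsOpen V ∧ V.Nonempty ∧ ∀ y ∈ V, T p y = T q y) →
      ∀ y : X, T p y = T q y := by
    intro p q hpq y
    have h := hSigma Set.univ isOpen_univ ⟨x₀, trivial⟩
    have hmem : (p, q) ∈ {p : (Fin k → ℕ) × (Fin k → ℕ) |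
        ∃ V : Set X, IsOpen V ∧ V.Nonempty ∧ ∀ y ∈ V, T p.1 y = T p.2 y} := hpq
    rw [← h] at hmem
    exact hmem y trivial
  apply Set.eq_of_subset_of_subset
  · -- interior ⊆ RHS
    intro γ hγint
    have hiso : γ ∈ Iso := interior_subset hγint
    have hnhds : Iso ∈ nhds γ := mem_interior_iff_mem_nhds.mp hγint
    obtain ⟨t, ht, hγt, htsub⟩ := hbasis.mem_nhds_iff.mp hnhds
    obtain ⟨f, ⟨hfin, hfsub⟩, rfl⟩ := ht
    -- reduce the finite intersection to a single basic set
    have key : ∀ f : Set (Set (DRGroupoid T)), f.Finite → f ⊆ S → γ ∈ ⋂₀ f →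
        ∃ (U V : Set X) (m n : Fin k → ℕ), IsOpen U ∧ IsOpen V ∧
          γ ∈ ZSet T U V m n ∧ ZSet T U V m n ⊆ ⋂₀ f := by
      intro f hfin
      refine Set.Finite.induction_on f hfin ?_ @fun a s ha hsfin IH => ?_
      · intro _ _
        obtain ⟨mw, nw, hgw, hTw⟩ := γ.property
        exact ⟨Set.univ, Set.univ, mw, nw, isOpen_univ, isOpen_univ,
          ⟨trivial, trivial, hgw.symm, hTw⟩, by simp⟩
      · intro hsub hγmem
        have hγa : γ ∈ a := hγmem a (Set.mem_insert a s)
        have hγs : γ ∈ ⋂₀ s := fun b hb => hγmem b (Set.mem_insert_of_mem a hb)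
        obtain ⟨U₁, V₁, m₁, n₁, hU₁, hV₁, hγZ₁, hZ₁sub⟩ :=
          IH (fun b hb => hsub (Set.mem_insert_of_mem a hb)) hγs
        obtain ⟨U₂, V₂, m₂, n₂, hU₂, hV₂, ha_eq⟩ := hsub (Set.mem_insert a s)
        rw [ha_eq] at hγa
        obtain ⟨U, V, m, n, hU, hV, hγZ, hZsub⟩ :=
          zset_inter_basis T hTadd hloc hU₁ hV₁ hU₂ hV₂ hγZ₁ hγa
        refine ⟨U, V, m, n, hU, hV, hγZ, ?_⟩
        rw [Set.sInter_insert]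
        intro γ' hγ'
        obtain ⟨h₁, h₂⟩ := hZsub hγ'
        exact ⟨ha_eq ▸ h₂, hZ₁sub h₁⟩
    obtain ⟨U, V, m, n, hU, hV, hγZ, hZsub⟩ := key f hfin hfsub hγt
    have hZiso : ZSet T U V m n ⊆ Iso := hZsub.trans htsub
    obtain ⟨W, hW, hWne, hWeq⟩ := zset_subset_isotropy T hloc hU hV hγZ hZiso
    exact ⟨hiso, m, n, ⟨W, hW, hWne, hWeq⟩, hγZ.2.2.1.symm⟩
  · -- RHS ⊆ interior
    rintro γ ⟨hiso, p, q, hpq, hg⟩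
    have hglobpq := hglob p q hpq
    obtain ⟨e, hx_e, hTe⟩ := hloc q γ.val.1
    have hγZ : γ ∈ ZSet T e.source e.source p q := by
      refine ⟨hx_e, ?_, hg.symm, ?_⟩
      · show γ.val.2.2 ∈ e.source
        rw [← hiso]; exact hx_e
      · rw [hglobpq, hiso]
    have hZiso : ZSet T e.source e.source p q ⊆ Iso := by
      rintro γ' ⟨hy, hw, -, hT'⟩
      have h : T q γ'.val.1 = T q γ'.val.2.2 := (hglobpq _).symm.trans hT'
      rw [hTe] at h
      exact e.injOn hy hw h
    have hZopen : IsOpen (ZSet T e.source e.source p q) :=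
      TopologicalSpace.isOpen_generateFrom_of_mem
        ⟨e.source, e.source, p, q, e.open_source, e.open_source, rfl⟩
    exact mem_interior.mpr ⟨_, hZiso, hZopen, hγZ⟩
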